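/- Let S be a measurable space, κ a Markov kernel from S to S, ν a probability measure on S, and δ ∈ (0,1] such that κ(x, A) ≥ δ·ν(A) for every x ∈ S and every measurable set A. Then there exists a unique probability measure π on S that is invariant for κ (i.e. π.bind κ = π), and for every probability measure μ on S and every n ∈ ℕ, sup over measurable A of |(μ.bind κⁿ)(A) − π(A)| ≤ (1 − δ)ⁿ, where κⁿ denotes the n-fold composition of the kernel κ with itself. -/

import Mathlib

open MeasureTheory ProbabilityTheory

/-- The total variation distance between two measures:
`dTV(μ, ν) = sup { |μ(A) - ν(A)| : A measurable }`. -/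
noncomputable def tvDist {S : Type*} [MeasurableSpace S] (μ ν : Measure S) : ℝ :=
  ⨆ A : {A : Set S // MeasurableSet A}, |(μ A).toReal - (ν A).toReal|

section DoeblinAux

variable {S : Type*} [MeasurableSpace S]

lemma doeblin_smul_finite (ν : Measure S) [IsFiniteMeasure ν] (δ : ℝ) :
    IsFiniteMeasure (ENNReal.ofReal δ • ν) := by
  constructor
  rw [Measure.smul_apply, smul_eq_mul]
  exact ENNReal.mul_lt_top ENNReal.ofReal_ne_top.lt_top (measure_lt_top ν _)

/-- The residual kernel `R x = (κ x - δ ν) / (1 - δ)` of the Doeblin decomposition. -/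
noncomputable def resKer (κ : Kernel S S) (ν : Measure S) [IsFiniteMeasure ν] (δ : ℝ)
    (hle : ∀ x, ENNReal.ofReal δ • ν ≤ κ x) : Kernel S S where
  toFun x := (ENNReal.ofReal (1 - δ))⁻¹ • (κ x - ENNReal.ofReal δ • ν)
  measurable' := by
    haveI := doeblin_smul_finite ν δ
    apply Measure.measurable_of_measurable_coe
    intro A hA
    simp only [Measure.smul_apply, smul_eq_mul]
    have h : ∀ x, (κ x - ENNReal.ofReal δ • ν) A = κ x A - ENNReal.ofReal δ * ν A := by
      intro x
      rw [Measure.sub_apply hA (hle x), Measure.smul_apply, smul_eq_mul]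
    simp_rw [h]
    exact (((κ.measurable_coe hA).sub measurable_const)).const_mul _

lemma resKer_apply (κ : Kernel S S) (ν : Measure S) [IsFiniteMeasure ν] (δ : ℝ)
    (hle : ∀ x, ENNReal.ofReal δ • ν ≤ κ x) (x : S) {A : Set S} (hA : MeasurableSet A) :
    resKer κ ν δ hle x A = (ENNReal.ofReal (1 - δ))⁻¹ * (κ x A - ENNReal.ofReal δ * ν A) := by
  haveI := doeblin_smul_finite ν δ
  show ((ENNReal.ofReal (1 - δ))⁻¹ • (κ x - ENNReal.ofReal δ • ν)) A = _
  rw [Measure.smul_apply, smul_eq_mul, Measure.sub_apply hA (hle x), Measure.smul_apply,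
    smul_eq_mul]

lemma doeblin_bind_prob (κ : Kernel S S) [IsMarkovKernel κ] (μ : Measure S)
    [IsProbabilityMeasure μ] : IsProbabilityMeasure (μ.bind (fun x => κ x)) := by
  constructor
  rw [Measure.bind_apply MeasurableSet.univ (Kernel.measurable κ).aemeasurable]
  simp

lemma doeblin_iterate_prob (κ : Kernel S S) [IsMarkovKernel κ] (μ : Measure S)
    [IsProbabilityMeasure μ] (n : ℕ) :
    IsProbabilityMeasure ((fun m : Measure S => m.bind (fun x => κ x))^[n] μ) := by
  induction n with
  | zero => simpa
  | succ n ih =>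
    rw [Function.iterate_succ_apply']
    haveI := ih
    exact doeblin_bind_prob κ _

lemma doeblin_bind_add (f : S → Measure S) (hf : Measurable f) (μ₁ μ₂ : Measure S) :
    (μ₁ + μ₂).bind f = μ₁.bind f + μ₂.bind f := by
  ext A hA
  rw [Measure.bind_apply hA hf.aemeasurable, Measure.add_apply, Measure.bind_apply hA hf.aemeasurable,
    Measure.bind_apply hA hf.aemeasurable, lintegral_add_measure]

lemma doeblin_bind_smul (f : S → Measure S) (hf : Measurable f) (c : ENNReal) (μ : Measure S) :
    (c • μ).bind f = c • (μ.bind f) := by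
  ext A hA
  rw [Measure.smul_apply, smul_eq_mul, Measure.bind_apply hA hf.aemeasurable, Measure.bind_apply hA hf.aemeasurable,
    lintegral_smul_measure, smul_eq_mul]

lemma doeblin_tvDist_le {μ ν : Measure S} {c : ℝ}
    (h : ∀ A : Set S, MeasurableSet A → |(μ A).toReal - (ν A).toReal| ≤ c) :
    tvDist μ ν ≤ c := by
  haveI : Nonempty {A : Set S // MeasurableSet A} := ⟨⟨∅, MeasurableSet.empty⟩⟩
  exact ciSup_le fun A => h A.1 A.2

lemma doeblin_prob_toReal_le_one (μ : Measure S) [IsProbabilityMeasure μ] (A : Set S) :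
    (μ A).toReal ≤ 1 := by
  have := ENNReal.toReal_mono ENNReal.one_ne_top (prob_le_one (μ := μ) (s := A))
  simpa using this

end DoeblinAux

/-- **Supporting lemma for Theorem 2.** A Markov kernel `κ` satisfying a Doeblin minorization
condition `κ x A ≥ δ · ν A` (for all states `x` and measurable `A`, with `δ ∈ (0,1]` and `ν` a
probability measure) has a unique invariant probability measure `π`, and the distribution of
the chain converges to `π` geometrically and uniformly in the initial distribution:
`dTV(μ κⁿ, π) ≤ (1 - δ)ⁿ` for every probability measure `μ` and every `n`. -/
theorem doeblin_unique_stationary_geometric_convergence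
    {S : Type*} [MeasurableSpace S]
    (κ : Kernel S S) [IsMarkovKernel κ]
    (ν : Measure S) [IsProbabilityMeasure ν]
    (δ : ℝ) (hδ : δ ∈ Set.Ioc (0 : ℝ) 1)
    (hmin : ∀ x : S, ∀ A : Set S, MeasurableSet A → ENNReal.ofReal δ * ν A ≤ κ x A) :
    ∃ π : Measure S, IsProbabilityMeasure π ∧ π.bind (fun x => κ x) = π ∧
      (∀ π' : Measure S, IsProbabilityMeasure π' → π'.bind (fun x => κ x) = π' → π' = π) ∧
      (∀ μ : Measure S, IsProbabilityMeasure μ → ∀ n : ℕ,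
        tvDist ((fun m : Measure S => m.bind (fun x => κ x))^[n] μ) π ≤ (1 - δ) ^ n) := by
  obtain ⟨hδ0, hδ1⟩ := hδ
  set T : Measure S → Measure S := fun m => m.bind (fun x => κ x) with hT
  rcases eq_or_lt_of_le hδ1 with h1 | h1
  · -- δ = 1 : then κ x = ν for every x
    subst h1
    have key : ∀ x : S, ∀ A : Set S, MeasurableSet A → κ x A = ν A := by
      intro x A hA
      have h₁ : ν A ≤ κ x A := by simpa using hmin x A hA
      have h₂ : ν Aᶜ ≤ κ x Aᶜ := by simpa using hmin x Aᶜ hA.compl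
      refine le_antisymm ?_ h₁
      rw [prob_compl_eq_one_sub hA, prob_compl_eq_one_sub hA] at h₂
      calc κ x A = 1 - (1 - κ x A) := (ENNReal.sub_sub_cancel ENNReal.one_ne_top prob_le_one).symm
        _ ≤ 1 - (1 - ν A) := tsub_le_tsub_left h₂ 1
        _ = ν A := ENNReal.sub_sub_cancel ENNReal.one_ne_top prob_le_one
    have hbind : ∀ (μ : Measure S), IsProbabilityMeasure μ → T μ = ν := by
      intro μ hμ
      ext A hA
      rw [hT]
      simp only
      rw [Measure.bind_apply hA (Kernel.measurable κ).aemeasurable]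
      calc ∫⁻ x, κ x A ∂μ = ∫⁻ _, ν A ∂μ := lintegral_congr fun x => key x A hA
        _ = ν A := by simp [measure_univ]
    have hiter : ∀ n : ℕ, T^[n] ν = ν := by
      intro n
      induction n with
      | zero => rfl
      | succ n ih => rw [Function.iterate_succ_apply', ih, hbind ν inferInstance]
    refine ⟨ν, inferInstance, hbind ν inferInstance, fun π' h' hinv => by
      rw [← hinv]; exact hbind π' h', ?_⟩
    intro μ hμ n
    match n with
    | 0 =>
      simp only [Function.iterate_zero_apply, sub_self, pow_zero]
      apply doeblin_tvDist_le
      intro A hA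
      rw [abs_le]
      constructor
      · have := doeblin_prob_toReal_le_one ν A
        have := ENNReal.toReal_nonneg (a := μ A)
        linarith
      · have := doeblin_prob_toReal_le_one μ A
        have := ENNReal.toReal_nonneg (a := ν A)
        linarith
    | (n+1) =>
      have : T^[n+1] μ = ν := by
        rw [Function.iterate_succ_apply, hbind μ hμ, hiter n]
      rw [this]
      have : tvDist ν ν ≤ 0 := doeblin_tvDist_le fun A hA => by simp
      simpa using this.trans (by positivity)
  · -- δ < 1
    set eδ : ENNReal := ENNReal.ofReal δ with heδ
    set er : ENNReal := ENNReal.ofReal (1 - δ) with her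
    have heδ0 : eδ ≠ 0 := by simp [heδ, ENNReal.ofReal_eq_zero]; linarith
    have heδtop : eδ ≠ ⊤ := ENNReal.ofReal_ne_top
    have her0 : er ≠ 0 := by simp [her, ENNReal.ofReal_eq_zero]; linarith
    have hertop : er ≠ ⊤ := ENNReal.ofReal_ne_top
    have her_eq : er = 1 - eδ := by
      rw [her, heδ, ← ENNReal.ofReal_one, ← ENNReal.ofReal_sub _ hδ0.le]
    have heδ_le_one : eδ ≤ 1 := ENNReal.ofReal_le_one.2 hδ1
    have heδ_eq : eδ = 1 - er := by
      rw [her_eq, ENNReal.sub_sub_cancel ENNReal.one_ne_top heδ_le_one]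
    have hle : ∀ x, eδ • ν ≤ κ x := by
      intro x
      rw [Measure.le_iff]
      intro s hs
      rw [Measure.smul_apply, smul_eq_mul]
      exact hmin x s hs
    set R : Kernel S S := resKer κ ν δ hle with hR
    have hRapp : ∀ x : S, ∀ A : Set S, MeasurableSet A →
        R x A = er⁻¹ * (κ x A - eδ * ν A) := fun x A hA => resKer_apply κ ν δ hle x hA
    -- Doeblin decomposition of κ
    have hdec : ∀ x : S, ∀ A : Set S, MeasurableSet A →
        κ x A = eδ * ν A + er * R x A := by
      intro x A hA
      rw [hRapp x A hA, ← mul_assoc, ENNReal.mul_inv_cancel her0 hertop, one_mul,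
        add_tsub_cancel_of_le (hmin x A hA)]
    haveI hRmarkov : IsMarkovKernel R := by
      constructor
      intro x
      constructor
      rw [hRapp x Set.univ MeasurableSet.univ]
      simp only [measure_univ, mul_one]
      rw [← her_eq]
      exact ENNReal.inv_mul_cancel her0 hertop
    -- one-step decomposition of bind
    have hbind : ∀ (μ : Measure S), IsProbabilityMeasure μ →
        T μ = eδ • ν + er • (μ.bind (fun x => R x)) := by
      intro μ hμ
      ext A hA
      rw [hT]
      simp only
      rw [Measure.bind_apply hA (Kernel.measurable κ).aemeasurable]
      have : ∀ x, κ x A = eδ * ν A + er * R x A := fun x => hdec x A hA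
      calc ∫⁻ x, κ x A ∂μ = ∫⁻ x, (eδ * ν A + er * R x A) ∂μ :=
            lintegral_congr this
        _ = eδ * ν A + er * (μ.bind (fun x => R x)) A := by
            rw [lintegral_add_left measurable_const, lintegral_const, measure_univ, mul_one,
              lintegral_const_mul er (R.measurable_coe hA),
              Measure.bind_apply hA (Kernel.measurable R).aemeasurable]
        _ = (eδ • ν + er • (μ.bind (fun x => R x))) A := by
            rw [Measure.add_apply, Measure.smul_apply, smul_eq_mul, Measure.smul_apply,
              smul_eq_mul]
    -- linearity of iterates of T
    have hTadd : ∀ (k : ℕ) (m₁ m₂ : Measure S), T^[k] (m₁ + m₂) = T^[k] m₁ + T^[k] m₂ := by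
      intro k
      induction k with
      | zero => intro m₁ m₂; rfl
      | succ k ih =>
        intro m₁ m₂
        rw [Function.iterate_succ_apply, Function.iterate_succ_apply,
          Function.iterate_succ_apply, hT]
        simp only
        rw [doeblin_bind_add _ (Kernel.measurable κ), ih]
    have hTsmul : ∀ (k : ℕ) (c : ENNReal) (m : Measure S), T^[k] (c • m) = c • T^[k] m := by
      intro k
      induction k with
      | zero => intro c m; rfl
      | succ k ih =>
        intro c m
        rw [Function.iterate_succ_apply, Function.iterate_succ_apply, hT]
        simp only
        rw [doeblin_bind_smul _ (Kernel.measurable κ), ih]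
    -- the contraction estimate
    have key : ∀ n : ℕ, ∀ α β : Measure S, IsProbabilityMeasure α → IsProbabilityMeasure β →
        ∀ A : Set S, MeasurableSet A →
        |((T^[n] α) A).toReal - ((T^[n] β) A).toReal| ≤ (1 - δ) ^ n := by
      intro n
      induction n with
      | zero =>
        intro α β hα hβ A hA
        simp only [Function.iterate_zero_apply, pow_zero]
        rw [abs_le]
        constructor
        · have := doeblin_prob_toReal_le_one β A
          have := ENNReal.toReal_nonneg (a := α A)
          linarith
        · have := doeblin_prob_toReal_le_one α A
          have := ENNReal.toReal_nonneg (a := β A)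
          linarith
      | succ n ih =>
        intro α β hα hβ A hA
        haveI : IsProbabilityMeasure (α.bind (fun x => R x)) := doeblin_bind_prob R α
        haveI : IsProbabilityMeasure (β.bind (fun x => R x)) := doeblin_bind_prob R β
        haveI := doeblin_iterate_prob κ ν
        haveI h₁ := doeblin_iterate_prob κ (α.bind (fun x => R x)) (n := n)
        haveI h₂ := doeblin_iterate_prob κ (β.bind (fun x => R x)) (n := n)
        haveI h₃ := doeblin_iterate_prob κ ν (n := n)
        rw [Function.iterate_succ_apply, Function.iterate_succ_apply, hbind α hα, hbind β hβ,
          hTadd, hTadd, hTsmul, hTsmul, hTsmul]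
        have expand : ∀ (m : Measure S), IsProbabilityMeasure (T^[n] m) →
            ((eδ • T^[n] ν + er • T^[n] m) A).toReal
              = δ * ((T^[n] ν) A).toReal + (1 - δ) * ((T^[n] m) A).toReal := by
          intro m hm
          rw [Measure.add_apply, Measure.smul_apply, smul_eq_mul, Measure.smul_apply,
            smul_eq_mul, ENNReal.toReal_add, ENNReal.toReal_mul, ENNReal.toReal_mul,
            heδ, her, ENNReal.toReal_ofReal hδ0.le, ENNReal.toReal_ofReal (by linarith)]
          · exact ENNReal.mul_ne_top heδtop (measure_ne_top _ _)
          · exact ENNReal.mul_ne_top hertop (measure_ne_top _ _)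
        rw [expand _ h₁, expand _ h₂]
        have hdiff : δ * ((T^[n] ν) A).toReal
              + (1 - δ) * ((T^[n] (α.bind (fun x => R x))) A).toReal
            - (δ * ((T^[n] ν) A).toReal
              + (1 - δ) * ((T^[n] (β.bind (fun x => R x))) A).toReal)
            = (1 - δ) * (((T^[n] (α.bind (fun x => R x))) A).toReal
              - ((T^[n] (β.bind (fun x => R x))) A).toReal) := by ring
        rw [hdiff, abs_mul, abs_of_nonneg (by linarith : (0:ℝ) ≤ 1 - δ)]
        calc (1 - δ) * |((T^[n] (α.bind (fun x => R x))) A).toReal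
              - ((T^[n] (β.bind (fun x => R x))) A).toReal|
            ≤ (1 - δ) * (1 - δ) ^ n := mul_le_mul_of_nonneg_left
              (ih (α.bind (fun x => R x)) (β.bind (fun x => R x)) inferInstance inferInstance A hA)
              (by linarith)
          _ = (1 - δ) ^ (n + 1) := by ring
    -- construction of the stationary measure
    set U : Measure S → Measure S := fun m => m.bind (fun x => R x) with hU
    set ρ : ℕ → Measure S := fun n => U^[n] ν with hρdef
    haveI hρprob : ∀ n, IsProbabilityMeasure (ρ n) := fun n => doeblin_iterate_prob R ν n
    set π : Measure S := Measure.sum (fun n => (eδ * er ^ n) • ρ n) with hπ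
    have hπA : ∀ A : Set S, MeasurableSet A → π A = ∑' n, eδ * er ^ n * ρ n A := by
      intro A hA
      rw [hπ, Measure.sum_apply _ hA]
      simp only [Measure.smul_apply, smul_eq_mul]
    haveI hπprob : IsProbabilityMeasure π := by
      constructor
      rw [hπA Set.univ MeasurableSet.univ]
      simp only [measure_univ, mul_one]
      rw [ENNReal.tsum_mul_left, ENNReal.tsum_geometric, ← heδ_eq]
      exact ENNReal.mul_inv_cancel heδ0 heδtop
    have hπinv : T π = π := by
      rw [hbind π hπprob]
      ext A hA
      have hbR : (π.bind (fun x => R x)) A = ∑' n, eδ * er ^ n * ρ (n + 1) A := by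
        rw [Measure.bind_apply hA (Kernel.measurable R).aemeasurable, hπ, lintegral_sum_measure]
        congr 1
        funext n
        rw [lintegral_smul_measure]
        congr 1
        rw [← Measure.bind_apply hA (Kernel.measurable R).aemeasurable]
        have : ρ (n + 1) = (ρ n).bind (fun x => R x) := by
          rw [hρdef]
          simp only
          rw [Function.iterate_succ_apply']
        rw [this]
      rw [Measure.add_apply, Measure.smul_apply, smul_eq_mul, Measure.smul_apply, smul_eq_mul,
        hbR, hπA A hA]
      conv_rhs => rw [tsum_eq_zero_add' ENNReal.summable]
      conv_lhs => rw [← ENNReal.tsum_mul_left]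
      have hρ0 : ρ 0 = ν := rfl
      congr 1
      · rw [hρ0, pow_zero, mul_one]
      · exact tsum_congr fun n => by ring
    have hπiter : ∀ n : ℕ, T^[n] π = π := by
      intro n
      induction n with
      | zero => rfl
      | succ n ih => rw [Function.iterate_succ_apply', ih, hπinv]
    refine ⟨π, hπprob, hπinv, ?_, ?_⟩
    · intro π' hπ' hinv
      have hiter' : ∀ n : ℕ, T^[n] π' = π' := by
        intro n
        induction n with
        | zero => rfl
        | succ n ih => rw [Function.iterate_succ_apply', ih]; exact hinv
      ext A hA
      have hn : ∀ n : ℕ, |(π' A).toReal - (π A).toReal| ≤ (1 - δ) ^ n := by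
        intro n
        have := key n π' π hπ' hπprob A hA
        rwa [hiter' n, hπiter n] at this
      have hlim : Filter.Tendsto (fun n : ℕ => (1 - δ) ^ n) Filter.atTop (nhds 0) :=
        tendsto_pow_atTop_nhds_zero_of_lt_one (by linarith) (by linarith)
      have h0 : |(π' A).toReal - (π A).toReal| ≤ 0 :=
        ge_of_tendsto hlim (Filter.Eventually.of_forall hn)
      have heq : (π' A).toReal = (π A).toReal := by
        have := abs_nonneg ((π' A).toReal - (π A).toReal)
        have : |(π' A).toReal - (π A).toReal| = 0 := le_antisymm h0 this
        linarith [abs_eq_zero.mp this]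
      exact (ENNReal.toReal_eq_toReal_iff' (measure_ne_top π' A) (measure_ne_top π A)).mp heq
    · intro μ hμ n
      apply doeblin_tvDist_le
      intro A hA
      have := key n μ π hμ hπprob A hA
      rwa [hπiter n] at this
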